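/- arXiv:math/9907009 — 2 statements merged into one kernel-verified Lean document; each statement's English description precedes it below -/
import Mathlib

section
/- For every u ∈ T^n and every 1 ≤ i ≤ n−1: if σ̄_i(u) = u, then σ_i(u) = u. -/
/- Setting (common to all statements):
`V` is the complex vector space with basis `X_1, …, X_N`, `T = T(V)` the tensor algebra,
realized concretely as the algebra of the free monoid of words in the letters `Fin N`;
the homogeneous component `T^n` is the span of the words of length `n`.
For `j < i` we are given nonzero scalars `b i j` and elements `p i j` in the span of the
`X_k ⊗ X_l` with `k, l ≤ i - 1`; `I_R` is the two-sided ideal generated by the elements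
`X_i ⊗ X_j − b_{ij} X_j ⊗ X_i − p_{ij}`, and `𝒜 = T/I_R`. -/

open scoped BigOperators

noncomputable section

namespace QDiff

/-- Words in the letters `X_1, …, X_N` (indexed by `Fin N`). -/
abbrev Word (N : ℕ) := FreeMonoid (Fin N)

/-- The tensor algebra `T(V)` over the `N`-dimensional space `V` with basis `X_1,…,X_N`,
realized concretely as the monoid algebra on words. -/
abbrev T (N : ℕ) := MonoidAlgebra ℂ (Word N)

variable {N : ℕ}

/-- The basis vector `X_i` of `V ⊆ T(V)`. -/
def X (i : Fin N) : T N := MonoidAlgebra.single (FreeMonoid.of i) 1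

/-- The monomial of `T(V)` associated to a word. -/
def mono (w : Word N) : T N := MonoidAlgebra.single w 1

/-- Length (tensor degree) of a word. -/
def wlen (w : Word N) : ℕ := (FreeMonoid.toList w).length

/-- `cnt w k`: the number of occurrences of the letter `X_k` in the word `w`;
so `fun k => cnt w k` is `ℓ(w)`. -/
def cnt (w : Word N) (k : Fin N) : ℕ := (FreeMonoid.toList w).count k

/-- `w' <_l w`: at the smallest index at which `ℓ(w')` and `ℓ(w)` differ,
the entry of `ℓ(w')` is strictly greater than that of `ℓ(w)`. -/
def lexLt (w' w : Word N) : Prop :=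
  ∃ k : Fin N, (∀ j : Fin N, j < k → cnt w' j = cnt w j) ∧ cnt w k < cnt w' k

/-- `w' ≤_l w`. -/
def lexLe (w' w : Word N) : Prop := (∀ k : Fin N, cnt w' k = cnt w k) ∨ lexLt w' w

/-- The homogeneous component `T^n` of the tensor algebra. -/
def Tdeg (N n : ℕ) : Submodule ℂ (T N) :=
  Submodule.span ℂ {x : T N | ∃ w : Word N, wlen w = n ∧ x = mono w}

variable (b : Fin N → Fin N → ℂ) (p : Fin N → Fin N → T N)

/-- The scalars `b i j` (for `j < i`) are nonzero. -/
def GoodB : Prop := ∀ i j : Fin N, j < i → b i j ≠ 0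

/-- Each `p i j` (for `j < i`) lies in the span of the monomials `X_k ⊗ X_l`
with `k, l ≤ i - 1`. -/
def GoodP : Prop := ∀ i j : Fin N, j < i →
  p i j ∈ Submodule.span ℂ {x : T N | ∃ k l : Fin N, k < i ∧ l < i ∧ x = X k * X l}

/-- The generator `X_i ⊗ X_j − b_{ij} X_j ⊗ X_i − p_{ij}` of the ideal of relations. -/
def relGen (i j : Fin N) : T N := X i * X j - b i j • (X j * X i) - p i j

/-- The two-sided ideal `I_R` of relations (as a `ℂ`-submodule it is the span of the
elements `a ⬝ relGen i j ⬝ c`). -/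
def IR : Submodule ℂ (T N) :=
  Submodule.span ℂ
    {x : T N | ∃ (i j : Fin N) (a c : T N), j < i ∧ x = a * relGen b p i j * c}

/-- Condition (EA): every `u ∈ I_R` lies in the span of the elements
`a ⊗ (X_i ⊗ X_j − b_{ij} X_j ⊗ X_i − p_{ij}) ⊗ c`, where `j < i` and `a, c` are monomials
of `T` such that the monomial `a ⊗ X_i ⊗ X_j ⊗ c` is `≤_l` every monomial occurring in `u`. -/
def EA : Prop :=
  ∀ u ∈ IR b p, u ∈ Submodule.span ℂ
    {x : T N | ∃ (i j : Fin N) (a c : Word N), j < i ∧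
      x = mono a * relGen b p i j * mono c ∧
      ∀ w ∈ (u.coeff : Word N →₀ ℂ).support,
        lexLe (a * (FreeMonoid.of i * FreeMonoid.of j) * c) w}

/-- The map `S : V ⊗ V → V ⊗ V` on pairs of basis vectors. -/
def Sact (x y : Fin N) : T N :=
  if y < x then b x y • (X y * X x) + p x y
  else if x < y then (b y x)⁻¹ • (X y * X x - p y x)
  else X x * X y

/-- The map `S̄ : V ⊗ V → V ⊗ V` on pairs of basis vectors. -/
def SbarAct (x y : Fin N) : T N :=
  if y < x then b x y • (X y * X x)
  else if x < y then (b y x)⁻¹ • (X y * X x)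
  else X x * X y

/-- Extend a function on words to a linear endomorphism of `T(V)`. -/
def liftWord (f : Word N → T N) : T N →ₗ[ℂ] T N :=
  Finsupp.lsum ℂ (fun w => LinearMap.toSpanSingleton ℂ (T N) (f w)) ∘ₗ
    (MonoidAlgebra.coeffLinearEquiv ℂ).toLinearMap

/-- The action of the paper's `σ_{k+1}` (acting on the tensor factors in 0-indexed
positions `k, k+1`) on a word; identity on words that are too short. -/
def sigmaWord (k : ℕ) (w : Word N) : T N :=
  if h : k + 2 ≤ (FreeMonoid.toList w).length then
    mono (FreeMonoid.ofList ((FreeMonoid.toList w).take k)) *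
      Sact b p ((FreeMonoid.toList w).get ⟨k, by omega⟩)
        ((FreeMonoid.toList w).get ⟨k + 1, by omega⟩) *
      mono (FreeMonoid.ofList ((FreeMonoid.toList w).drop (k + 2)))
  else mono w

/-- The paper's operator `σ_{k+1}`: it acts as `S` on the tensor factors in 0-indexed
positions `k, k+1` and as the identity on all other factors. -/
def sigma (k : ℕ) : T N →ₗ[ℂ] T N := liftWord (sigmaWord b p k)

/-- The action of the paper's `σ̄_{k+1}` on a word. -/
def sigmabarWord (k : ℕ) (w : Word N) : T N :=
  if h : k + 2 ≤ (FreeMonoid.toList w).length then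
    mono (FreeMonoid.ofList ((FreeMonoid.toList w).take k)) *
      SbarAct b ((FreeMonoid.toList w).get ⟨k, by omega⟩)
        ((FreeMonoid.toList w).get ⟨k + 1, by omega⟩) *
      mono (FreeMonoid.ofList ((FreeMonoid.toList w).drop (k + 2)))
  else mono w

/-- The paper's operator `σ̄_{k+1}`: it acts as `S̄` on the tensor factors in 0-indexed
positions `k, k+1` and as the identity on all other factors. -/
def sigmabar (k : ℕ) : T N →ₗ[ℂ] T N := liftWord (sigmabarWord b k)

/-- The scalar by which `S̄` twists the (ordered) pair `(x, y)`. -/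
def betaC (x y : Fin N) : ℂ := if y < x then b x y else if x < y then (b y x)⁻¹ else 1

/-- The coefficient of the quasi-permutation action of `σ ∈ S_n` on the word
`X_{f 0} ⊗ ⋯ ⊗ X_{f (n-1)}`: the product of `β` over the inversions of `σ`. -/
def permCoeff {n : ℕ} (σ : Equiv.Perm (Fin n)) (f : Fin n → Fin N) : ℂ :=
  ∏ q ∈ Finset.univ.filter (fun q : Fin n × Fin n => q.1 < q.2 ∧ σ q.2 < σ q.1),
    betaC b (f q.1) (f q.2)

/-- The quasi-permutation action of `σ ∈ S_n` on a word
(identity on words of length `≠ n`). -/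
def permWordFun {n : ℕ} (σ : Equiv.Perm (Fin n)) (w : Word N) : T N :=
  if h : (FreeMonoid.toList w).length = n then
    permCoeff b σ (fun j => (FreeMonoid.toList w).get (Fin.cast h.symm j)) •
      mono (FreeMonoid.ofList
        (List.ofFn fun j => (FreeMonoid.toList w).get (Fin.cast h.symm (σ⁻¹ j))))
  else mono w

/-- The operator `σ̄` on `T^n` for an arbitrary permutation `σ ∈ S_n`
(the quasi-permutation representation). -/
def sigmabarPerm {n : ℕ} (σ : Equiv.Perm (Fin n)) : T N →ₗ[ℂ] T N :=
  liftWord (permWordFun b σ)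

/-- The quasi-symmetrization operator `P_quasisym = (1/n!) ∑_{σ ∈ S_n} σ̄` on `T^n`. -/
def Pquasisym (n : ℕ) : T N →ₗ[ℂ] T N :=
  (n.factorial : ℂ)⁻¹ • ∑ σ : Equiv.Perm (Fin n), sigmabarPerm b σ

/-- The adjacent transposition `s_{k+1} = (k, k+1)` (0-indexed) in `S_n`. -/
def swapAdj (n : ℕ) (k : {k : ℕ // k + 2 ≤ n}) : Equiv.Perm (Fin n) :=
  Equiv.swap ⟨k.1, by omega⟩ ⟨k.1 + 1, by omega⟩

/-- A choice, for each `σ ∈ S_n`, of a list of adjacent transpositions. -/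
def DecompChoice (n : ℕ) := Equiv.Perm (Fin n) → List {k : ℕ // k + 2 ≤ n}

/-- The chosen lists really are decompositions: `σ = s_{i_1} ⋯ s_{i_r}`. -/
def ValidDecomp {n : ℕ} (D : DecompChoice n) : Prop :=
  ∀ σ : Equiv.Perm (Fin n), ((D σ).map (swapAdj n)).prod = σ

/-- `σ̂ = σ_{i_1} ⋯ σ_{i_r}` for the chosen decomposition `σ = s_{i_1} ⋯ s_{i_r}`. -/
def Phat {n : ℕ} (D : DecompChoice n) (σ : Equiv.Perm (Fin n)) : Module.End ℂ (T N) :=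
  ((D σ).map (fun k => (sigma b p k.1 : Module.End ℂ (T N)))).prod

/-- `P = (1/n!) ∑_{σ ∈ S_n} σ̂` (depending on the chosen decompositions `D`). -/
def POp {n : ℕ} (D : DecompChoice n) : Module.End ℂ (T N) :=
  (n.factorial : ℂ)⁻¹ • ∑ σ : Equiv.Perm (Fin n), Phat b p D σ

/-- `Q` is the operator `𝒫_qsym = lim_{M → ∞} P^M`: on each `T^n` and for every choice
of decompositions, the sequence `P^M u` is eventually equal to `Q u`. -/
def IsPqsym (Q : T N →ₗ[ℂ] T N) : Prop :=
  ∀ (n : ℕ) (D : DecompChoice n), ValidDecomp D →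
    ∀ u ∈ Tdeg N n, ∃ N₀ : ℕ, ∀ M ≥ N₀, ((POp b p D) ^ M) u = Q u

/-- The operator `I_r ⊗ Q^k ⊗ I_s` on `T^{r+k+s}`: on a word, apply `Q` to the middle
`k` tensor factors and the identity to the outer factors. -/
def middleMap (Q : T N →ₗ[ℂ] T N) (r k : ℕ) : T N →ₗ[ℂ] T N :=
  liftWord (fun w =>
    mono (FreeMonoid.ofList ((FreeMonoid.toList w).take r)) *
      Q (mono (FreeMonoid.ofList (((FreeMonoid.toList w).drop r).take k))) *
      mono (FreeMonoid.ofList ((FreeMonoid.toList w).drop (r + k))))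

/-- The pairing between `T(V^*)` (realized via the dual basis, hence again as the span
of words) and `T(V)`: a dual-basis word pairs to `1` with the corresponding word of the
same degree, and to `0` with all other words. -/
def pairT (w z : T N) : ℂ :=
  Finsupp.sum (w.coeff : Word N →₀ ℂ) (fun a c => c * (z.coeff : Word N →₀ ℂ) a)

/-- The quotient relation defining the quadratic algebra `𝒜 = T/I_R = RingQuot (Rel b p)`. -/
inductive Rel (b : Fin N → Fin N → ℂ) (p : Fin N → Fin N → T N) : T N → T N → Prop
  | mk (i j : Fin N) (h : j < i) : Rel b p (X i * X j) (b i j • (X j * X i) + p i j)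

/-- The ordered monomial `X_1^{a_1} ⊗ X_2^{a_2} ⊗ ⋯ ⊗ X_N^{a_N}`. -/
def ordMono (a : Fin N → ℕ) : T N := ((List.finRange N).map (fun i => X i ^ a i)).prod

/-- Auxiliary: the `p`-correction term by which `σ` differs from `σ̄` on a word. -/
def Eword (k : ℕ) (w : Word N) : T N :=
  if h : k + 2 ≤ (FreeMonoid.toList w).length then
    (if ((FreeMonoid.toList w).get ⟨k + 1, by omega⟩) < ((FreeMonoid.toList w).get ⟨k, by omega⟩) then
      mono (FreeMonoid.ofList ((FreeMonoid.toList w).take k)) *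
        p ((FreeMonoid.toList w).get ⟨k, by omega⟩) ((FreeMonoid.toList w).get ⟨k + 1, by omega⟩) *
        mono (FreeMonoid.ofList ((FreeMonoid.toList w).drop (k + 2)))
    else if ((FreeMonoid.toList w).get ⟨k, by omega⟩) < ((FreeMonoid.toList w).get ⟨k + 1, by omega⟩) then
      (-(b ((FreeMonoid.toList w).get ⟨k + 1, by omega⟩) ((FreeMonoid.toList w).get ⟨k, by omega⟩))⁻¹) •
        (mono (FreeMonoid.ofList ((FreeMonoid.toList w).take k)) *
          p ((FreeMonoid.toList w).get ⟨k + 1, by omega⟩) ((FreeMonoid.toList w).get ⟨k, by omega⟩) *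
          mono (FreeMonoid.ofList ((FreeMonoid.toList w).drop (k + 2))))
    else 0)
  else 0

lemma liftWord_single (f : Word N → T N) (w : Word N) (c : ℂ) :
    liftWord f (MonoidAlgebra.single w c) = c • f w := by
  show Finsupp.lsum ℂ (fun w => LinearMap.toSpanSingleton ℂ (T N) (f w)) (Finsupp.single w c) = c • f w
  rw [Finsupp.lsum_single, LinearMap.toSpanSingleton_apply]

lemma list_split {α : Type*} (l : List α) (k : ℕ) (h : k + 2 ≤ l.length) :
    l = l.take k ++ l.get ⟨k, by omega⟩ :: l.get ⟨k + 1, by omega⟩ :: l.drop (k + 2) := by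
  conv_lhs => rw [← List.take_append_drop k l]
  congr 1
  rw [List.drop_eq_getElem_cons (by omega : k < l.length)]
  congr 1
  rw [List.drop_eq_getElem_cons (by omega : k + 1 < l.length)]
  rfl

lemma cat_length {α : Type*} (t : List α) (x y : α) (d : List α) (k : ℕ) (ht : t.length = k) :
    (t ++ x :: y :: d).length = k + 2 + d.length := by simp [ht]; omega

lemma cat_get1 {α : Type*} (t : List α) (x y : α) (d : List α) (k : ℕ) (ht : t.length = k)
    (h : k < (t ++ x :: y :: d).length) : (t ++ x :: y :: d).get ⟨k, h⟩ = x := by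
  subst ht
  simp [List.getElem_append_right (le_refl t.length)]

lemma cat_get2 {α : Type*} (t : List α) (x y : α) (d : List α) (k : ℕ) (ht : t.length = k)
    (h : k + 1 < (t ++ x :: y :: d).length) : (t ++ x :: y :: d).get ⟨k + 1, h⟩ = y := by
  subst ht
  simp [List.getElem_append_right (Nat.le_succ t.length)]

lemma cat_take {α : Type*} (t : List α) (x y : α) (d : List α) (k : ℕ) (ht : t.length = k) :
    (t ++ x :: y :: d).take k = t := by
  rw [← ht, List.take_left]

lemma cat_drop {α : Type*} (t : List α) (x y : α) (d : List α) (k : ℕ) (ht : t.length = k) :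
    (t ++ x :: y :: d).drop (k + 2) = d := by
  have : t ++ x :: y :: d = (t ++ [x, y]) ++ d := by simp
  rw [this]
  have h2 : (t ++ [x, y]).length = k + 2 := by simp [ht]
  rw [← h2, List.drop_left]

lemma mono_cat (t : List (Fin N)) (x y : Fin N) (d : List (Fin N)) :
    mono (FreeMonoid.ofList (t ++ x :: y :: d)) =
      mono (FreeMonoid.ofList t) * (X x * X y) * mono (FreeMonoid.ofList d) := by
  have : FreeMonoid.ofList (t ++ x :: y :: d) =
      FreeMonoid.ofList t * (FreeMonoid.of x * FreeMonoid.of y) * FreeMonoid.ofList d := by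
    apply FreeMonoid.toList.injective
    simp
  rw [this]
  simp [mono, X, MonoidAlgebra.single_mul_single]

lemma toList_ofList' (l : List (Fin N)) : FreeMonoid.toList (FreeMonoid.ofList l) = l := rfl

/-- Computation of `Eword` on a concatenated word. -/
lemma Eword_cat (t : List (Fin N)) (x y : Fin N) (d : List (Fin N)) (k : ℕ) (ht : t.length = k) :
    Eword b p k (FreeMonoid.ofList (t ++ x :: y :: d)) =
      (if y < x then mono (FreeMonoid.ofList t) * p x y * mono (FreeMonoid.ofList d)
      else if x < y then
        (-(b y x)⁻¹) • (mono (FreeMonoid.ofList t) * p y x * mono (FreeMonoid.ofList d))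
      else 0) := by
  have hlen : k + 2 ≤ (FreeMonoid.toList (FreeMonoid.ofList (t ++ x :: y :: d))).length := by
    rw [toList_ofList', cat_length t x y d k ht]; omega
  rw [Eword, dif_pos hlen]
  simp only [toList_ofList'] at *
  erw [cat_get1 t x y d k ht, cat_get2 t x y d k ht, cat_take t x y d k ht, cat_drop t x y d k ht]

/-- Computation of `sigmabarWord` on a concatenated word. -/
lemma sigmabarWord_cat (t : List (Fin N)) (x y : Fin N) (d : List (Fin N)) (k : ℕ)
    (ht : t.length = k) :
    sigmabarWord b k (FreeMonoid.ofList (t ++ x :: y :: d)) =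
      mono (FreeMonoid.ofList t) * SbarAct b x y * mono (FreeMonoid.ofList d) := by
  have hlen : k + 2 ≤ (FreeMonoid.toList (FreeMonoid.ofList (t ++ x :: y :: d))).length := by
    rw [toList_ofList', cat_length t x y d k ht]; omega
  rw [sigmabarWord, dif_pos hlen]
  simp only [toList_ofList'] at *
  erw [cat_get1 t x y d k ht, cat_get2 t x y d k ht, cat_take t x y d k ht, cat_drop t x y d k ht]

/-- On each word, `σ = σ̄ + E`. -/
lemma sigmaWord_eq (k : ℕ) (w : Word N) :
    sigmaWord b p k w = sigmabarWord b k w + Eword b p k w := by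
  by_cases h : k + 2 ≤ (FreeMonoid.toList w).length
  · rw [sigmaWord, sigmabarWord, Eword, dif_pos h, dif_pos h, dif_pos h]
    set x := (FreeMonoid.toList w).get ⟨k, by omega⟩
    set y := (FreeMonoid.toList w).get ⟨k + 1, by omega⟩
    set a := mono (N := N) (FreeMonoid.ofList ((FreeMonoid.toList w).take k))
    set c := mono (N := N) (FreeMonoid.ofList ((FreeMonoid.toList w).drop (k + 2)))
    rcases lt_trichotomy x y with hxy | hxy | hxy
    · rw [Sact, SbarAct, if_neg (asymm hxy), if_neg (asymm hxy), if_pos hxy,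
        if_pos hxy, if_neg (asymm hxy), if_pos hxy]
      rw [smul_sub]
      simp only [mul_sub, sub_mul, mul_smul_comm, smul_mul_assoc, neg_smul]
      ring_nf
      abel
    · rw [Sact, SbarAct, if_neg (hxy ▸ lt_irrefl x), if_neg (hxy ▸ lt_irrefl x),
        if_neg (hxy ▸ lt_irrefl x), if_neg (hxy ▸ lt_irrefl x), if_neg (hxy ▸ lt_irrefl x),
        if_neg (hxy ▸ lt_irrefl x), add_zero]
    · rw [Sact, SbarAct, if_pos hxy, if_pos hxy, if_pos hxy]
      simp only [mul_add, add_mul, mul_smul_comm, smul_mul_assoc]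
  · rw [sigmaWord, sigmabarWord, Eword, dif_neg h, dif_neg h, dif_neg h, add_zero]

/-- `σ = σ̄ + (lift of E)` as linear maps. -/
lemma sigma_eq (k : ℕ) :
    sigma b p k = sigmabar b k + liftWord (Eword b p k) := by
  refine MonoidAlgebra.lhom_ext' fun w => LinearMap.ext fun c => ?_
  show sigma b p k (MonoidAlgebra.single w c) = (sigmabar b k + liftWord (Eword b p k)) (MonoidAlgebra.single w c)
  rw [sigma, liftWord_single, LinearMap.add_apply, sigmabar]
  show _ = liftWord _ (MonoidAlgebra.single w c) + liftWord _ (MonoidAlgebra.single w c)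
  rw [liftWord_single, liftWord_single, ← smul_add, sigmaWord_eq]

/-- Key identity: `E ∘ σ̄ = −E` on each word. -/
lemma Eword_sigmabarWord (hb : GoodB b) (k : ℕ) (w : Word N) :
    liftWord (Eword b p k) (sigmabarWord b k w) = - Eword b p k w := by
  by_cases h : k + 2 ≤ (FreeMonoid.toList w).length
  · obtain ⟨t, x, y, d, ht, hw⟩ :
        ∃ (t : List (Fin N)) (x y : Fin N) (d : List (Fin N)),
          t.length = k ∧ w = FreeMonoid.ofList (t ++ x :: y :: d) := by
      refine ⟨(FreeMonoid.toList w).take k, (FreeMonoid.toList w).get ⟨k, by omega⟩,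
        (FreeMonoid.toList w).get ⟨k + 1, by omega⟩, (FreeMonoid.toList w).drop (k + 2),
        List.length_take_of_le (by omega), ?_⟩
      apply FreeMonoid.toList.injective
      rw [toList_ofList']
      exact list_split (FreeMonoid.toList w) k h
    subst hw
    rw [sigmabarWord_cat b t x y d k ht, Eword_cat b p t x y d k ht]
    rcases lt_trichotomy x y with hxy | hxy | hxy
    · rw [SbarAct, if_neg (asymm hxy), if_pos hxy, if_neg (asymm hxy), if_pos hxy]
      have : mono (N := N) (FreeMonoid.ofList t) * ((b y x)⁻¹ • (X y * X x)) *
          mono (FreeMonoid.ofList d) =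
          (b y x)⁻¹ • mono (FreeMonoid.ofList (t ++ y :: x :: d)) := by
        rw [mono_cat]
        simp [mul_smul_comm, smul_mul_assoc]
      rw [this]
      have hsingle : mono (N := N) (FreeMonoid.ofList (t ++ y :: x :: d)) =
          MonoidAlgebra.single (FreeMonoid.ofList (t ++ y :: x :: d)) 1 := rfl
      rw [map_smul, hsingle, liftWord_single, one_smul, Eword_cat b p t y x d k ht,
        if_pos hxy]
      rw [neg_smul, neg_neg]
    · subst hxy
      rw [SbarAct, if_neg (lt_irrefl x), if_neg (lt_irrefl x), if_neg (lt_irrefl x),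
        if_neg (lt_irrefl x)]
      have : mono (N := N) (FreeMonoid.ofList t) * (X x * X x) * mono (FreeMonoid.ofList d) =
          mono (FreeMonoid.ofList (t ++ x :: x :: d)) := by rw [mono_cat]
      rw [this]
      have hsingle : mono (N := N) (FreeMonoid.ofList (t ++ x :: x :: d)) =
          MonoidAlgebra.single (FreeMonoid.ofList (t ++ x :: x :: d)) 1 := rfl
      rw [hsingle, liftWord_single, one_smul, Eword_cat b p t x x d k ht,
        if_neg (lt_irrefl x), if_neg (lt_irrefl x), neg_zero]
    · rw [SbarAct, if_pos hxy, if_pos hxy]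
      have : mono (N := N) (FreeMonoid.ofList t) * (b x y • (X y * X x)) *
          mono (FreeMonoid.ofList d) =
          b x y • mono (FreeMonoid.ofList (t ++ y :: x :: d)) := by
        rw [mono_cat]
        simp [mul_smul_comm, smul_mul_assoc]
      rw [this]
      have hsingle : mono (N := N) (FreeMonoid.ofList (t ++ y :: x :: d)) =
          MonoidAlgebra.single (FreeMonoid.ofList (t ++ y :: x :: d)) 1 := rfl
      rw [map_smul, hsingle, liftWord_single, one_smul, Eword_cat b p t y x d k ht,
        if_neg (asymm hxy), if_pos hxy]
      rw [smul_smul, mul_neg, mul_inv_cancel₀ (hb x y hxy), neg_smul, one_smul]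
  · rw [sigmabarWord, dif_neg h, Eword, dif_neg h, neg_zero]
    have hsingle : mono (N := N) w = MonoidAlgebra.single w 1 := rfl
    rw [hsingle, liftWord_single, one_smul, Eword, dif_neg h]

lemma liftE_sigmabar (hb : GoodB b) (k : ℕ) (u : T N) :
    liftWord (Eword b p k) (sigmabar b k u) = - liftWord (Eword b p k) u := by
  have : (liftWord (Eword b p k)).comp (sigmabar b k) = - liftWord (Eword b p k) := by
    refine MonoidAlgebra.lhom_ext' fun w => LinearMap.ext fun c => ?_
    show liftWord (Eword b p k) (sigmabar b k (MonoidAlgebra.single w c)) = _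
    rw [sigmabar, liftWord_single, map_smul, Eword_sigmabarWord b p hb k w]
    show _ = -(liftWord (Eword b p k) (MonoidAlgebra.single w c))
    rw [liftWord_single, smul_neg]
  have h2 := LinearMap.congr_fun this u
  exact h2

/-- for `u ∈ T^n` and `1 ≤ i ≤ n−1` (here `i = k+1`):
if `σ̄_i(u) = u` then `σ_i(u) = u`. -/
theorem statement7 {N : ℕ} (b : Fin N → Fin N → ℂ) (p : Fin N → Fin N → T N)
    (hb : GoodB b) (hp : GoodP p) :
    ∀ (n k : ℕ), k + 2 ≤ n → ∀ u ∈ Tdeg N n,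
      sigmabar b k u = u → sigma b p k u = u := by
  intro n k hk u hu hfix
  have h1 := liftE_sigmabar b p hb k u
  rw [hfix] at h1
  have h2 : (2 : ℂ) • liftWord (Eword b p k) u = 0 := by
    rw [two_smul]
    nth_rewrite 1 [h1]
    simp
  have hE : liftWord (Eword b p k) u = 0 := by
    rcases smul_eq_zero.mp h2 with h | h
    · exact absurd h two_ne_zero
    · exact h
  rw [sigma_eq, LinearMap.add_apply, hfix, hE, add_zero]

end QDiff
end
end

section
/- Assume (EA). For all r, k, s ∈ ℕ: (I_r ⊗ 𝒫_qsym^k ⊗ I_s) ∘ 𝒫_qsym^{r+k+s} = 𝒫_qsym^{r+k+s}, where 𝒫_qsym^m denotes the restriction of 𝒫_qsym to T^m and I_r ⊗ 𝒫_qsym^k ⊗ I_s is the operator on T^{r+k+s} = T^r ⊗ T^k ⊗ T^s applying 𝒫_qsym^k to the middle tensor factor and the identity to the outer factors. -/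
/- Setting (common to all statements):
`V` is the complex vector space with basis `X_1, …, X_N`, `T = T(V)` the tensor algebra,
realized concretely as the algebra of the free monoid of words in the letters `Fin N`;
the homogeneous component `T^n` is the span of the words of length `n`.
For `j < i` we are given nonzero scalars `b i j` and elements `p i j` in the span of the
`X_k ⊗ X_l` with `k, l ≤ i - 1`; `I_R` is the two-sided ideal generated by the elements
`X_i ⊗ X_j − b_{ij} X_j ⊗ X_i − p_{ij}`, and `𝒜 = T/I_R`. -/

open scoped BigOperators

noncomputable section

namespace QDiff

variable {N : ℕ}

variable (b : Fin N → Fin N → ℂ) (p : Fin N → Fin N → T N)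

section Proof17

variable (b : Fin N → Fin N → ℂ) (p : Fin N → Fin N → T N)

lemma liftWord_mono (f : Word N → T N) (w : Word N) : liftWord f (mono w) = f w := by
  have h : liftWord f (mono w) = Finsupp.sum (Finsupp.single w (1:ℂ)) fun a c => c • f a := rfl
  rw [h, Finsupp.sum_single_index (by simp), one_smul]

lemma liftWord_apply (f : Word N → T N) (x : T N) :
    liftWord f x = (x.coeff : Word N →₀ ℂ).sum fun w c => c • f w := rfl

lemma mono_mul (a c : Word N) : mono (N := N) a * mono c = mono (a * c) := by
  simp [mono, MonoidAlgebra.single_mul_single]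

lemma mono_mem_Tdeg {n : ℕ} {w : Word N} (h : wlen w = n) : mono w ∈ Tdeg N n :=
  Submodule.subset_span ⟨w, h, rfl⟩

lemma wlen_ofList (l : List (Fin N)) : wlen (FreeMonoid.ofList l) = l.length := rfl

lemma wlen_mul (a c : Word N) : wlen (a * c) = wlen a + wlen c := by
  simp [wlen, FreeMonoid.toList_mul]

lemma supp_of_mem_Tdeg {n : ℕ} {u : T N} (hu : u ∈ Tdeg N n) :
    ∀ w ∈ (u.coeff : Word N →₀ ℂ).support, wlen w = n := by
  classical
  induction hu using Submodule.span_induction with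
  | mem x hx =>
    obtain ⟨w, hw, rfl⟩ := hx
    intro v hv
    have hvw : v = w := Finset.mem_singleton.mp (Finsupp.support_single_subset hv)
    rwa [hvw]
  | zero => simp
  | add x y hx hy ihx ihy =>
    intro w hw
    rw [MonoidAlgebra.coeff_add] at hw
    rcases Finset.mem_union.mp (Finsupp.support_add hw) with h | h
    · exact ihx w h
    · exact ihy w h
  | smul a x hx ihx =>
    intro w hw
    rw [MonoidAlgebra.coeff_smul] at hw
    exact ihx w (Finsupp.support_smul hw)

lemma mul_mem_Tdeg {n m : ℕ} {x y : T N} (hx : x ∈ Tdeg N n) (hy : y ∈ Tdeg N m) :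
    x * y ∈ Tdeg N (n + m) := by
  induction hx using Submodule.span_induction with
  | mem x hx =>
    obtain ⟨w, hw, rfl⟩ := hx
    induction hy using Submodule.span_induction with
    | mem y hy =>
      obtain ⟨v, hv, rfl⟩ := hy
      rw [mono_mul]
      exact mono_mem_Tdeg (by rw [wlen_mul, hw, hv])
    | zero => rw [mul_zero]; exact Submodule.zero_mem _
    | add y z _ _ ihy ihz => rw [mul_add]; exact Submodule.add_mem _ ihy ihz
    | smul a y _ ihy => rw [mul_smul_comm]; exact Submodule.smul_mem _ _ ihy
  | zero => rw [zero_mul]; exact Submodule.zero_mem _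
  | add x z _ _ ihx ihz => rw [add_mul]; exact Submodule.add_mem _ ihx ihz
  | smul a x _ ihx => rw [smul_mul_assoc]; exact Submodule.smul_mem _ _ ihx

lemma X_mul_X_mem (i j : Fin N) : X i * X j ∈ Tdeg N 2 := by
  rw [X, X]
  rw [show (MonoidAlgebra.single (FreeMonoid.of i) (1:ℂ) : T N) = mono (FreeMonoid.of i) from rfl]
  rw [show (MonoidAlgebra.single (FreeMonoid.of j) (1:ℂ) : T N) = mono (FreeMonoid.of j) from rfl]
  rw [mono_mul]
  exact mono_mem_Tdeg rfl

lemma Sact_mem (hp : GoodP p) (x y : Fin N) : Sact b p x y ∈ Tdeg N 2 := by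
  have hX : ∀ i j : Fin N, X i * X j ∈ Tdeg N 2 := X_mul_X_mem
  have hpmem : ∀ i j : Fin N, j < i → p i j ∈ Tdeg N 2 := by
    intro i j hij
    refine Submodule.span_le.mpr ?_ (hp i j hij)
    rintro z ⟨k, l, _, _, rfl⟩
    exact hX k l
  rw [Sact]
  split_ifs with h1 h2
  · exact Submodule.add_mem _ (Submodule.smul_mem _ _ (hX y x)) (hpmem x y h1)
  · exact Submodule.smul_mem _ _ (Submodule.sub_mem _ (hX y x) (hpmem y x h2))
  · exact hX x y

lemma sigmaWord_mem (hp : GoodP p) (j : ℕ) (w : Word N) :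
    sigmaWord b p j w ∈ Tdeg N (wlen w) := by
  rw [sigmaWord]
  split_ifs with h
  · have h1 : mono (N := N) (FreeMonoid.ofList ((FreeMonoid.toList w).take j)) ∈ Tdeg N j :=
      mono_mem_Tdeg (by rw [wlen_ofList, List.length_take]; omega)
    have h2 : mono (N := N) (FreeMonoid.ofList ((FreeMonoid.toList w).drop (j + 2))) ∈
        Tdeg N (wlen w - (j + 2)) :=
      mono_mem_Tdeg (by rw [wlen_ofList, List.length_drop]; rfl)
    have he : wlen w = j + 2 + (wlen w - (j + 2)) := by unfold wlen at h ⊢; omega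
    rw [he]
    exact mul_mem_Tdeg (mul_mem_Tdeg h1 (Sact_mem b p hp _ _)) h2
  · exact mono_mem_Tdeg rfl

lemma sigma_mem (hp : GoodP p) (j n : ℕ) {x : T N} (hx : x ∈ Tdeg N n) :
    sigma b p j x ∈ Tdeg N n := by
  induction hx using Submodule.span_induction with
  | mem x hx =>
    obtain ⟨w, hw, rfl⟩ := hx
    rw [sigma, liftWord_mono]
    rw [← hw]
    exact sigmaWord_mem b p hp j w
  | zero => rw [map_zero]; exact Submodule.zero_mem _
  | add x y _ _ ihx ihy => rw [map_add]; exact Submodule.add_mem _ ihx ihy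
  | smul a x _ ihx => rw [map_smul]; exact Submodule.smul_mem _ _ ihx

/-- Composition of `sigma`s along a list of (plain) indices. -/
def endProd (L : List ℕ) : Module.End ℂ (T N) :=
  (L.map (fun k => (sigma b p k : Module.End ℂ (T N)))).prod

lemma endProd_nil : endProd b p ([] : List ℕ) = 1 := rfl

lemma endProd_cons (j : ℕ) (L : List ℕ) :
    endProd b p (j :: L) = (sigma b p j : Module.End ℂ (T N)) * endProd b p L := by
  rw [endProd, List.map_cons, List.prod_cons]; rfl

lemma endProd_mem (hp : GoodP p) (L : List ℕ) (n : ℕ) {x : T N} (hx : x ∈ Tdeg N n) :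
    endProd b p L x ∈ Tdeg N n := by
  induction L generalizing x with
  | nil => exact hx
  | cons j L ih =>
    rw [endProd_cons, Module.End.mul_apply]
    exact sigma_mem b p hp j n (ih hx)

lemma Phat_eq_endProd {n : ℕ} (D : DecompChoice n) (σ : Equiv.Perm (Fin n)) :
    Phat b p D σ = endProd b p ((D σ).map (fun k => k.1)) := by
  rw [Phat, endProd, List.map_map]
  rfl

lemma POp_mem (hp : GoodP p) {n m : ℕ} (D : DecompChoice n) {x : T N} (hx : x ∈ Tdeg N m) :
    POp b p D x ∈ Tdeg N m := by
  rw [POp, LinearMap.smul_apply, LinearMap.sum_apply]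
  refine Submodule.smul_mem _ _ (Submodule.sum_mem _ fun σ _ => ?_)
  rw [Phat_eq_endProd]
  exact endProd_mem b p hp _ _ hx

lemma POp_pow_mem (hp : GoodP p) {n m : ℕ} (D : DecompChoice n) (M : ℕ) {x : T N}
    (hx : x ∈ Tdeg N m) : ((POp b p D) ^ M) x ∈ Tdeg N m := by
  induction M generalizing x with
  | zero => exact hx
  | succ M ih =>
    rw [pow_succ, Module.End.mul_apply]
    exact ih (POp_mem b p hp D hx)

lemma exists_validDecomp (m : ℕ) : ∃ D : DecompChoice m, ValidDecomp D := by
  have h : ∀ σ : Equiv.Perm (Fin m), ∃ L : List {k : ℕ // k + 2 ≤ m},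
      (L.map (swapAdj m)).prod = σ := by
    intro σ
    match m, σ with
    | 0, σ =>
      refine ⟨[], ?_⟩
      ext x
      exact absurd x.2 (by omega)
    | (n+1), σ =>
      have hσ : σ ∈ Submonoid.closure
          (Set.range fun i : Fin n ↦ Equiv.swap i.castSucc i.succ) := by
        rw [Equiv.Perm.mclosure_swap_castSucc_succ]; trivial
      obtain ⟨l, hl, hprod⟩ := Submonoid.exists_list_of_mem_closure hσ
      suffices hL : ∃ L : List {k : ℕ // k + 2 ≤ n + 1}, L.map (swapAdj (n+1)) = l by
        obtain ⟨L, hLl⟩ := hL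
        exact ⟨L, by rw [hLl, hprod]⟩
      clear hprod hσ
      induction l with
      | nil => exact ⟨[], rfl⟩
      | cons x l ih =>
        obtain ⟨L, hL⟩ := ih (fun y hy => hl y (List.mem_cons_of_mem _ hy))
        obtain ⟨i, hi⟩ := hl x (List.mem_cons_self)
        refine ⟨⟨i.1, by omega⟩ :: L, ?_⟩
        rw [List.map_cons, hL, ← hi]
        congr 1
  exact ⟨fun σ => Classical.choose (h σ), fun σ => Classical.choose_spec (h σ)⟩

lemma POp_fix {n : ℕ} {Q : T N →ₗ[ℂ] T N} (hQ : IsPqsym b p Q) {u : T N} (hu : u ∈ Tdeg N n)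
    (D : DecompChoice n) (hD : ValidDecomp D) : POp b p D (Q u) = Q u := by
  obtain ⟨M₀, hM⟩ := hQ n D hD u hu
  have h1 : ((POp b p D) ^ M₀) u = Q u := hM M₀ le_rfl
  have h2 : ((POp b p D) ^ (M₀ + 1)) u = Q u := hM _ (Nat.le_succ _)
  rw [pow_succ', Module.End.mul_apply, h1] at h2
  exact h2

lemma sigma_fix {n : ℕ} {Q : T N →ₗ[ℂ] T N} (hQ : IsPqsym b p Q) {u : T N} (hu : u ∈ Tdeg N n)
    (k : ℕ) (hk : k + 2 ≤ n) : sigma b p k (Q u) = Q u := by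
  obtain ⟨D₀, hD₀⟩ := exists_validDecomp n
  have hD' : ValidDecomp (fun γ => ⟨k, hk⟩ :: D₀ (swapAdj n ⟨k, hk⟩ * γ)) := by
    intro γ
    simp only [List.map_cons, List.prod_cons]
    rw [hD₀ (swapAdj n ⟨k, hk⟩ * γ), ← mul_assoc]
    rw [show swapAdj n ⟨k, hk⟩ * swapAdj n ⟨k, hk⟩ = 1 from Equiv.swap_mul_self _ _, one_mul]
  have key := POp_fix b p hQ hu _ hD'
  unfold POp at key
  rw [LinearMap.smul_apply, LinearMap.sum_apply] at key
  have hterm : ∀ γ : Equiv.Perm (Fin n),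
      Phat b p (fun γ => ⟨k, hk⟩ :: D₀ (swapAdj n ⟨k, hk⟩ * γ)) γ (Q u)
        = sigma b p k (Phat b p D₀ (swapAdj n ⟨k, hk⟩ * γ) (Q u)) := by
    intro γ
    unfold Phat
    rw [List.map_cons, List.prod_cons, Module.End.mul_apply]
  rw [Finset.sum_congr rfl fun γ _ => hterm γ, ← map_sum, ← map_smul] at key
  have hre : (∑ γ : Equiv.Perm (Fin n), Phat b p D₀ (swapAdj n ⟨k, hk⟩ * γ) (Q u))
      = ∑ γ : Equiv.Perm (Fin n), Phat b p D₀ γ (Q u) :=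
    Fintype.sum_bijective (fun γ => swapAdj n ⟨k, hk⟩ * γ)
      (Group.mulLeft_bijective _) _ _ (fun γ => rfl)
  rw [hre] at key
  have hP : (Nat.factorial n : ℂ)⁻¹ • (∑ γ : Equiv.Perm (Fin n), Phat b p D₀ γ (Q u))
      = POp b p D₀ (Q u) := by
    rw [POp, LinearMap.smul_apply, LinearMap.sum_apply]
  rw [hP, POp_fix b p hQ hu D₀ hD₀] at key
  exact key

lemma endProd_fix {n : ℕ} {Q : T N →ₗ[ℂ] T N} (hQ : IsPqsym b p Q) {u : T N} (hu : u ∈ Tdeg N n)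
    (L : List ℕ) (hL : ∀ j ∈ L, j + 2 ≤ n) : endProd b p L (Q u) = Q u := by
  induction L with
  | nil => rfl
  | cons j L ih =>
    rw [endProd_cons, Module.End.mul_apply, ih (fun i hi => hL i (List.mem_cons_of_mem _ hi))]
    exact sigma_fix b p hQ hu j (hL j (List.mem_cons_self))

lemma sigma_shift (r : ℕ) (pre m post : List (Fin N)) (hpre : pre.length = r) {j : ℕ}
    (hj : j + 2 ≤ m.length) :
    sigma b p (r + j) (mono (FreeMonoid.ofList (pre ++ (m ++ post)))) =
      mono (FreeMonoid.ofList pre) * sigma b p j (mono (FreeMonoid.ofList m)) *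
        mono (FreeMonoid.ofList post) := by
  have hlen : (FreeMonoid.toList (FreeMonoid.ofList (pre ++ (m ++ post)))).length
      = r + (m.length + post.length) := by
    simp [FreeMonoid.toList_ofList, hpre]
  rw [sigma, sigma, liftWord_mono, liftWord_mono, sigmaWord, sigmaWord,
    dif_pos (show j + 2 ≤ (FreeMonoid.toList (FreeMonoid.ofList m)).length by
      simpa [FreeMonoid.toList_ofList] using hj),
    dif_pos (show r + j + 2 ≤ (FreeMonoid.toList (FreeMonoid.ofList (pre ++ (m ++ post)))).length by
      rw [hlen]; omega)]
  simp only [FreeMonoid.toList_ofList]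
  have htake : (pre ++ (m ++ post)).take (r + j) = pre ++ m.take j := by
    rw [List.take_append, List.take_of_length_le (by omega), hpre,
      Nat.add_sub_cancel_left, List.take_append,
      Nat.sub_eq_zero_of_le (by omega), List.take_zero, List.append_nil]
  have hdrop : (pre ++ (m ++ post)).drop (r + j + 2) = m.drop (j + 2) ++ post := by
    rw [List.drop_append, List.drop_eq_nil_of_le (by omega), hpre,
      List.nil_append, show r + j + 2 - r = j + 2 by omega,
      List.drop_append, Nat.sub_eq_zero_of_le (by omega), List.drop_zero]
  have hget : ∀ (i : ℕ) (hi : i < m.length) (h : r + i < (pre ++ (m ++ post)).length),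
      (pre ++ (m ++ post)).get ⟨r + i, h⟩ = m.get ⟨i, hi⟩ := by
    intro i hi h
    rw [List.get_eq_getElem, List.get_eq_getElem]
    have e1 : (pre ++ (m ++ post))[r + i]'h
        = (m ++ post)[r + i - pre.length]'(by simp only [List.length_append] at h ⊢; omega) :=
      List.getElem_append_right (by omega)
    rw [e1]
    have e2 : r + i - pre.length = i := by omega
    simp only [e2]
    exact List.getElem_append_left hi
  have hget2 : ∀ (h : r + j + 1 < (pre ++ (m ++ post)).length),
      (pre ++ (m ++ post)).get ⟨r + j + 1, h⟩ = m.get ⟨j + 1, by omega⟩ := by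
    intro h
    rw [List.get_eq_getElem, List.get_eq_getElem]
    have e1 : (pre ++ (m ++ post))[r + j + 1]'h
        = (m ++ post)[r + j + 1 - pre.length]'(by
            simp only [List.length_append] at h ⊢; omega) :=
      List.getElem_append_right (by omega)
    rw [e1]
    have e2 : r + j + 1 - pre.length = j + 1 := by omega
    simp only [e2]
    exact List.getElem_append_left (by omega)
  have hS : ∀ h1 h2, Sact b p ((pre ++ (m ++ post)).get ⟨r + j, h1⟩)
      ((pre ++ (m ++ post)).get ⟨r + j + 1, h2⟩) =
      Sact b p (m.get ⟨j, by omega⟩) (m.get ⟨j + 1, by omega⟩) := fun h1 h2 => by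
    rw [hget j (by omega) h1, hget2 h2]
  rw [htake, hdrop]
  refine Eq.trans (congrArg (fun z => mono (FreeMonoid.ofList (pre ++ List.take j m)) * z *
    mono (FreeMonoid.ofList (List.drop (j + 2) m ++ post))) (hS _ _)) ?_
  simp only [FreeMonoid.ofList_append, ← mono_mul, mul_assoc]

lemma sigma_shift' (r kdeg : ℕ) (pre post : List (Fin N)) (hpre : pre.length = r) {j : ℕ}
    (hj : j + 2 ≤ kdeg) {y : T N} (hy : y ∈ Tdeg N kdeg) :
    sigma b p (r + j) (mono (FreeMonoid.ofList pre) * y * mono (FreeMonoid.ofList post)) =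
      mono (FreeMonoid.ofList pre) * sigma b p j y * mono (FreeMonoid.ofList post) := by
  induction hy using Submodule.span_induction with
  | mem x hx =>
    obtain ⟨w, hw, rfl⟩ := hx
    have hrep : mono (FreeMonoid.ofList pre) * mono w * mono (FreeMonoid.ofList post)
        = mono (FreeMonoid.ofList (pre ++ (FreeMonoid.toList w ++ post))) := by
      rw [mono_mul, mono_mul, FreeMonoid.ofList_append, FreeMonoid.ofList_append,
        FreeMonoid.ofList_toList, mul_assoc]
    rw [hrep, sigma_shift b p r pre (FreeMonoid.toList w) post hpre
      (show j + 2 ≤ (FreeMonoid.toList w).length by unfold wlen at hw; omega),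
      FreeMonoid.ofList_toList]
  | zero => simp
  | add x y _ _ ihx ihy =>
    rw [mul_add, add_mul, map_add, ihx, ihy, map_add, mul_add, add_mul]
  | smul a x _ ihx =>
    rw [mul_smul_comm, smul_mul_assoc, map_smul, ihx, map_smul, mul_smul_comm, smul_mul_assoc]

lemma endProd_shift (hp : GoodP p) (r kdeg : ℕ) (pre post : List (Fin N))
    (hpre : pre.length = r) (L : List ℕ) (hL : ∀ j ∈ L, j + 2 ≤ kdeg) {y : T N}
    (hy : y ∈ Tdeg N kdeg) :
    endProd b p (L.map (fun j => r + j))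
        (mono (FreeMonoid.ofList pre) * y * mono (FreeMonoid.ofList post))
      = mono (FreeMonoid.ofList pre) * endProd b p L y * mono (FreeMonoid.ofList post) := by
  induction L generalizing y with
  | nil => rfl
  | cons j L ih =>
    rw [List.map_cons, endProd_cons, endProd_cons, Module.End.mul_apply, Module.End.mul_apply,
      ih (fun i hi => hL i (List.mem_cons_of_mem _ hi)) hy,
      sigma_shift' b p r kdeg pre post hpre (hL j (List.mem_cons_self))
        (endProd_mem b p hp L kdeg hy)]

/-- The operator `I_r ⊗ P_k ⊗ I` built from shifted `sigma`s. -/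
def Pmid (r kdeg : ℕ) (Dk : DecompChoice kdeg) : Module.End ℂ (T N) :=
  (kdeg.factorial : ℂ)⁻¹ • ∑ τ : Equiv.Perm (Fin kdeg),
    endProd b p (((Dk τ).map (fun j => j.1)).map (fun j => r + j))

lemma Pmid_shift (hp : GoodP p) (r kdeg : ℕ) (Dk : DecompChoice kdeg)
    (pre post : List (Fin N)) (hpre : pre.length = r) {y : T N} (hy : y ∈ Tdeg N kdeg) :
    Pmid b p r kdeg Dk (mono (FreeMonoid.ofList pre) * y * mono (FreeMonoid.ofList post))
      = mono (FreeMonoid.ofList pre) * POp b p Dk y * mono (FreeMonoid.ofList post) := by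
  rw [Pmid, LinearMap.smul_apply, LinearMap.sum_apply, POp, LinearMap.smul_apply,
    LinearMap.sum_apply]
  have hterm : ∀ τ : Equiv.Perm (Fin kdeg),
      endProd b p (((Dk τ).map (fun j => j.1)).map (fun j => r + j))
          (mono (FreeMonoid.ofList pre) * y * mono (FreeMonoid.ofList post))
        = mono (FreeMonoid.ofList pre) * Phat b p Dk τ y * mono (FreeMonoid.ofList post) := by
    intro τ
    rw [Phat_eq_endProd]
    exact endProd_shift b p hp r kdeg pre post hpre _ (fun i hi => by
      obtain ⟨t, _, rfl⟩ := List.mem_map.mp hi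
      exact t.2) hy
  rw [Finset.sum_congr rfl fun τ _ => hterm τ, ← Finset.sum_mul, ← Finset.mul_sum,
    mul_smul_comm, smul_mul_assoc]

lemma Pmid_pow_shift (hp : GoodP p) (r kdeg : ℕ) (Dk : DecompChoice kdeg) (M : ℕ)
    (pre post : List (Fin N)) (hpre : pre.length = r) {y : T N} (hy : y ∈ Tdeg N kdeg) :
    ((Pmid b p r kdeg Dk) ^ M)
        (mono (FreeMonoid.ofList pre) * y * mono (FreeMonoid.ofList post))
      = mono (FreeMonoid.ofList pre) * ((POp b p Dk) ^ M) y * mono (FreeMonoid.ofList post) := by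
  induction M generalizing y with
  | zero => rfl
  | succ M ih =>
    rw [pow_succ', pow_succ', Module.End.mul_apply, Module.End.mul_apply, ih hy,
      Pmid_shift b p hp r kdeg Dk pre post hpre (POp_pow_mem b p hp Dk M hy)]

lemma Pmid_fix {n r kdeg : ℕ} (Dk : DecompChoice kdeg) {Q : T N →ₗ[ℂ] T N}
    (hQ : IsPqsym b p Q) {u : T N} (hu : u ∈ Tdeg N n) (hrk : r + kdeg ≤ n) :
    Pmid b p r kdeg Dk (Q u) = Q u := by
  rw [Pmid, LinearMap.smul_apply, LinearMap.sum_apply]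
  have hterm : ∀ τ : Equiv.Perm (Fin kdeg),
      endProd b p (((Dk τ).map (fun j => j.1)).map (fun j => r + j)) (Q u) = Q u := by
    intro τ
    refine endProd_fix b p hQ hu _ (fun i hi => ?_)
    obtain ⟨j, hj', rfl⟩ := List.mem_map.mp hi
    obtain ⟨t, _, rfl⟩ := List.mem_map.mp hj'
    have := t.2
    omega
  rw [Finset.sum_congr rfl fun τ _ => hterm τ, Finset.sum_const, Finset.card_univ,
    Fintype.card_perm, Fintype.card_fin, ← Nat.cast_smul_eq_nsmul ℂ, smul_smul,
    inv_mul_cancel₀ (Nat.cast_ne_zero.mpr (Nat.factorial_ne_zero kdeg)), one_smul]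

lemma Pmid_pow_fix {n r kdeg : ℕ} (Dk : DecompChoice kdeg) {Q : T N →ₗ[ℂ] T N}
    (hQ : IsPqsym b p Q) {u : T N} (hu : u ∈ Tdeg N n) (hrk : r + kdeg ≤ n) (M : ℕ) :
    ((Pmid b p r kdeg Dk) ^ M) (Q u) = Q u := by
  induction M with
  | zero => rfl
  | succ M ih =>
    rw [pow_succ, Module.End.mul_apply, Pmid_fix b p Dk hQ hu hrk, ih]

end Proof17

set_option maxHeartbeats 2000000 in
/-- `⋆`: under (EA),
`(I_r ⊗ 𝒫_qsym^k ⊗ I_s) ∘ 𝒫_qsym^{r+k+s} = 𝒫_qsym^{r+k+s}` on `T^{r+k+s}`. -/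
theorem statement17 {N : ℕ} (b : Fin N → Fin N → ℂ) (p : Fin N → Fin N → T N)
    (hb : GoodB b) (hp : GoodP p) (hEA : EA b p) :
    ∀ Q : T N →ₗ[ℂ] T N, IsPqsym b p Q →
      ∀ (r k s : ℕ), ∀ u ∈ Tdeg N (r + k + s),
        middleMap Q r k (Q u) = Q u := by
  classical
  intro Q hQ r k s u hu
  set n := r + k + s with hn
  obtain ⟨Dk, hDk⟩ := exists_validDecomp k
  obtain ⟨D₀, hD₀⟩ := exists_validDecomp n
  obtain ⟨M₀, hM₀⟩ := hQ n D₀ hD₀ u hu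
  have hQu : Q u ∈ Tdeg N n := by
    rw [← hM₀ M₀ le_rfl]
    exact POp_pow_mem b p hp D₀ M₀ hu
  have hsupp := supp_of_mem_Tdeg hQu
  have hmid : ∀ w : Word N, wlen w = n →
      mono (N := N) (FreeMonoid.ofList (((FreeMonoid.toList w).drop r).take k)) ∈ Tdeg N k := by
    intro w hw
    refine mono_mem_Tdeg ?_
    rw [wlen_ofList, List.length_take, List.length_drop]
    unfold wlen at hw
    omega
  set g : Word N → ℕ := fun w =>
    if h : wlen w = n then Classical.choose (hQ k Dk hDk _ (hmid w h)) else 0 with hg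
  set M := ((Q u).coeff.support).sup g with hMdef
  have hword : ∀ w ∈ (Q u).coeff.support,
      (mono (FreeMonoid.ofList ((FreeMonoid.toList w).take r)) *
        Q (mono (FreeMonoid.ofList (((FreeMonoid.toList w).drop r).take k))) *
        mono (FreeMonoid.ofList ((FreeMonoid.toList w).drop (r + k))))
      = ((Pmid b p r k Dk) ^ M) (mono w) := by
    intro w hw
    have hwn : wlen w = n := hsupp w hw
    have hlen : (FreeMonoid.toList w).length = n := hwn
    have hl : (FreeMonoid.toList w).take r ++
        ((((FreeMonoid.toList w).drop r).take k) ++ (FreeMonoid.toList w).drop (r + k))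
        = FreeMonoid.toList w := by
      rw [show (FreeMonoid.toList w).drop (r + k) = ((FreeMonoid.toList w).drop r).drop k by
        rw [List.drop_drop], List.take_append_drop, List.take_append_drop]
    have hsplit : mono w = mono (FreeMonoid.ofList ((FreeMonoid.toList w).take r)) *
        mono (FreeMonoid.ofList (((FreeMonoid.toList w).drop r).take k)) *
        mono (FreeMonoid.ofList ((FreeMonoid.toList w).drop (r + k))) := by
      rw [mono_mul, mono_mul, ← FreeMonoid.ofList_append, ← FreeMonoid.ofList_append,
        List.append_assoc, hl, FreeMonoid.ofList_toList]
    have hpre : ((FreeMonoid.toList w).take r).length = r := by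
      rw [List.length_take]
      omega
    rw [hsplit, Pmid_pow_shift b p hp r k Dk M _ _ hpre (hmid w hwn)]
    have hgw : M ≥ g w := Finset.le_sup hw
    have hspec := Classical.choose_spec (hQ k Dk hDk _ (hmid w hwn)) M
      (by rw [hg] at hgw; simp only [dif_pos hwn] at hgw; exact hgw)
    rw [hspec]
  have hrepr : Q u = Finsupp.sum (Q u).coeff (fun w c => c • mono w) := by
    have h1 : Finsupp.sum (Q u).coeff (fun w c => c • mono w)
        = Finsupp.sum (Q u).coeff (fun w c => MonoidAlgebra.single w c) := by
      refine Finsupp.sum_congr (fun w _ => ?_)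
      show ((Q u).coeff w) • (MonoidAlgebra.single w (1 : ℂ)) = _
      rw [MonoidAlgebra.smul_single, smul_eq_mul, mul_one]
    rw [h1, MonoidAlgebra.sum_coeff_single]
  calc middleMap Q r k (Q u)
      = Finsupp.sum (Q u).coeff (fun w c => c •
          (mono (FreeMonoid.ofList ((FreeMonoid.toList w).take r)) *
            Q (mono (FreeMonoid.ofList (((FreeMonoid.toList w).drop r).take k))) *
            mono (FreeMonoid.ofList ((FreeMonoid.toList w).drop (r + k))))) :=
        liftWord_apply _ _
    _ = Finsupp.sum (Q u).coeff
          (fun w c => c • (((Pmid b p r k Dk) ^ M) (mono w))) := by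
        refine Finsupp.sum_congr (fun w hw => ?_)
        rw [hword w hw]
    _ = ((Pmid b p r k Dk) ^ M) (Q u) := by
        conv_rhs => rw [hrepr]
        rw [map_finsuppSum]
        refine Finsupp.sum_congr (fun w _ => ?_)
        rw [map_smul]
    _ = Q u := Pmid_pow_fix (r := r) (kdeg := k) (n := n) b p Dk hQ hu (by omega) M

end QDiff
end
end
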